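/- Under the local expansions Φ(ζ,z) = γ(ζ)(ζₙ−zₙ) − r(ζ) + O(ρ²) and γ(ζ)(ζₙ−zₙ) + conj(Φ(ζ,z)) = −r(z) + O(ρ²) (where O(ρ²) terms are bounded by Cρ² with ρ ≳ |ζ−z|, and |γ| ≤ Γ bounded, |r(ζ)|, |r(z)| ≤ C), one has the product formula |Φ(ζ,z)|² = γ(ζ)γ(z)|ζₙ−zₙ|² + r(ζ)r(z) + R where |R| ≲ |r(ζ)|ρ² + ρ³ + ρ⁴ (with constants depending on the bounds above; the ρ³ term carries a factor bounded by |ζ| in the paper's coordinates). -/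

import Mathlib

/-- the product formula
`|Φ(ζ,z)|² = γ(ζ)γ(z)|ζₙ−zₙ|² + r(ζ)r(z) + R`, `|R| ≲ |r(ζ)|ρ² + ρ³ + ρ⁴`,
from the two local expansions of `Φ` (Lemma 4.3.iii of the paper). -/
theorem product_formula_for_Phi {D : Type*}
    (cn : D → ℂ) (r γ : D → ℝ) (ρ : D → D → ℝ) (Φ : D → D → ℂ)
    (Γ Cr Cρ : ℝ)
    (hρnn : ∀ ζ z, 0 ≤ ρ ζ z)
    (hγbdd : ∀ ζ, |γ ζ| ≤ Γ) (hrbdd : ∀ ζ, |r ζ| ≤ Cr)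
    (hcn : ∃ C : ℝ, ∀ ζ z, ‖cn ζ - cn z‖ ≤ C * ρ ζ z)
    (hγdiff : ∃ C : ℝ, ∀ ζ z, |γ ζ - γ z| ≤ C * ρ ζ z)
    -- local expansion Φ(ζ,z) = γ(ζ)(ζₙ−zₙ) − r(ζ) + O(ρ²):
    (h1 : ∃ C : ℝ, ∀ ζ z,
      ‖Φ ζ z - ((γ ζ : ℂ) * (cn ζ - cn z) - (r ζ : ℂ))‖ ≤ C * (ρ ζ z) ^ 2)
    -- cancellation γ(ζ)(ζₙ−zₙ) + conj Φ(ζ,z) = −r(z) + O(ρ²):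
    (h2 : ∃ C : ℝ, ∀ ζ z,
      ‖(γ ζ : ℂ) * (cn ζ - cn z) + (starRingEnd ℂ) (Φ ζ z) + (r z : ℂ)‖
        ≤ C * (ρ ζ z) ^ 2) :
    ∃ C : ℝ, ∀ ζ z,
      |‖Φ ζ z‖ ^ 2 - (γ ζ * γ z * ‖cn ζ - cn z‖ ^ 2 + r ζ * r z)|
        ≤ C * (|r ζ| * (ρ ζ z) ^ 2 + (ρ ζ z) ^ 3 + (ρ ζ z) ^ 4) := by
  obtain ⟨Ccn, hcn⟩ := hcn
  obtain ⟨Cγ, hγd⟩ := hγdiff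
  obtain ⟨C1, h1⟩ := h1
  obtain ⟨C2, h2⟩ := h2
  set Γ' := max Γ 0 with hΓ'
  set Ccn' := max Ccn 0 with hCcn'
  set Cγ' := max Cγ 0 with hCγ'
  set C1' := max C1 0 with hC1'
  set C2' := max C2 0 with hC2'
  have hΓ'0 : 0 ≤ Γ' := le_max_right _ _
  have hCcn'0 : 0 ≤ Ccn' := le_max_right _ _
  have hCγ'0 : 0 ≤ Cγ' := le_max_right _ _
  have hC1'0 : 0 ≤ C1' := le_max_right _ _
  have hC2'0 : 0 ≤ C2' := le_max_right _ _
  refine ⟨Γ' * Cγ' * Ccn' ^ 2 + (C1' + C2') + 2 * Γ' * Ccn' * C1' + C1' ^ 2,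
    fun ζ z => ?_⟩
  set ρ0 := ρ ζ z with hρ0def
  have hρ0 : 0 ≤ ρ0 := hρnn ζ z
  set Δ : ℂ := cn ζ - cn z with hΔdef
  set a : ℂ := (γ ζ : ℂ) * Δ with hadef
  set E1 : ℂ := Φ ζ z - (a - (r ζ : ℂ)) with hE1def
  set E2 : ℂ := a + (starRingEnd ℂ) (Φ ζ z) + (r z : ℂ) with hE2def
  -- norm-squared as sum of squares
  have hsq : ∀ w : ℂ, ‖w‖ ^ 2 = w.re ^ 2 + w.im ^ 2 := fun w => by
    rw [Complex.sq_norm, Complex.normSq_apply]; ring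
  -- components
  have hE1re : E1.re = (Φ ζ z).re - a.re + r ζ := by
    simp [hE1def]; ring
  have hE1im : E1.im = (Φ ζ z).im - a.im := by
    simp [hE1def]
  have hE2re : E2.re = a.re + (Φ ζ z).re + r z := by
    simp [hE2def]
  have hare : a.re = γ ζ * Δ.re := by
    simp [hadef, Complex.mul_re]
  have haim : a.im = γ ζ * Δ.im := by
    simp [hadef, Complex.mul_im]
  have ha : a.re ^ 2 + a.im ^ 2 = γ ζ ^ 2 * ‖Δ‖ ^ 2 := by
    rw [hare, haim, hsq Δ]; ring
  -- key exact identity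
  have key : ‖Φ ζ z‖ ^ 2 - (γ ζ * γ z * ‖Δ‖ ^ 2 + r ζ * r z)
      = γ ζ * (γ ζ - γ z) * ‖Δ‖ ^ 2
        + (- (r ζ) * E2.re - (r ζ) * E1.re
          + 2 * (a.re * E1.re + a.im * E1.im) + ‖E1‖ ^ 2) := by
    have hrz : r z = E2.re - a.re - (Φ ζ z).re := by rw [hE2re]; ring
    rw [hsq (Φ ζ z), hsq E1, hE1re, hE1im, hrz]
    linear_combination ha
  -- bounds
  have hγζ : |γ ζ| ≤ Γ' := (hγbdd ζ).trans (le_max_left _ _)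
  have hγdb : |γ ζ - γ z| ≤ Cγ' * ρ0 :=
    (hγd ζ z).trans (mul_le_mul_of_nonneg_right (le_max_left _ _) hρ0)
  have hΔb : ‖Δ‖ ≤ Ccn' * ρ0 :=
    (hcn ζ z).trans (mul_le_mul_of_nonneg_right (le_max_left _ _) hρ0)
  have hρ2 : (0:ℝ) ≤ ρ0 ^ 2 := sq_nonneg _
  have hE1b : ‖E1‖ ≤ C1' * ρ0 ^ 2 :=
    (h1 ζ z).trans (mul_le_mul_of_nonneg_right (le_max_left _ _) hρ2)
  have hE2b : ‖E2‖ ≤ C2' * ρ0 ^ 2 :=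
    (h2 ζ z).trans (mul_le_mul_of_nonneg_right (le_max_left _ _) hρ2)
  have hE1re' : |E1.re| ≤ ‖E1‖ := by
    exact Complex.abs_re_le_norm E1
  have hE2re' : |E2.re| ≤ ‖E2‖ := by
    exact Complex.abs_re_le_norm E2
  have hinner : |a.re * E1.re + a.im * E1.im| ≤ ‖a‖ * ‖E1‖ := by
    have h := Complex.abs_re_le_norm (a * (starRingEnd ℂ) E1)
    have hre : (a * (starRingEnd ℂ) E1).re = a.re * E1.re + a.im * E1.im := by
      simp [Complex.mul_re]
    rw [hre] at h
    calc |a.re * E1.re + a.im * E1.im| ≤ ‖a * (starRingEnd ℂ) E1‖ := h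
      _ = ‖a‖ * ‖E1‖ := by
          simp
  have hanorm : ‖a‖ = |γ ζ| * ‖Δ‖ := by
    rw [hadef, norm_mul, Complex.norm_real, Real.norm_eq_abs]
  have hanormb : ‖a‖ ≤ Γ' * (Ccn' * ρ0) := by
    rw [hanorm]
    exact mul_le_mul hγζ hΔb (norm_nonneg _) hΓ'0
  -- put it together
  have hΔ2 : ‖Δ‖ ^ 2 ≤ (Ccn' * ρ0) ^ 2 := by
    have := pow_le_pow_left₀ (norm_nonneg Δ) hΔb 2
    simpa using this
  have t1 : |γ ζ * (γ ζ - γ z) * ‖Δ‖ ^ 2| ≤ Γ' * Cγ' * Ccn' ^ 2 * ρ0 ^ 3 := by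
    rw [abs_mul, abs_mul]
    have h2' : |‖Δ‖ ^ 2| = ‖Δ‖ ^ 2 := abs_of_nonneg (sq_nonneg _)
    rw [h2']
    calc |γ ζ| * |γ ζ - γ z| * ‖Δ‖ ^ 2
        ≤ Γ' * (Cγ' * ρ0) * (Ccn' * ρ0) ^ 2 := by
          apply mul_le_mul
          · exact mul_le_mul hγζ hγdb (abs_nonneg _) hΓ'0
          · exact hΔ2
          · exact sq_nonneg _
          · positivity
      _ = Γ' * Cγ' * Ccn' ^ 2 * ρ0 ^ 3 := by ring
  have hE1sq : ‖E1‖ ^ 2 ≤ C1' ^ 2 * ρ0 ^ 4 := by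
    have := pow_le_pow_left₀ (norm_nonneg E1) hE1b 2
    calc ‖E1‖ ^ 2 ≤ (C1' * ρ0 ^ 2) ^ 2 := this
      _ = C1' ^ 2 * ρ0 ^ 4 := by ring
  have hinnerb : |a.re * E1.re + a.im * E1.im| ≤ Γ' * Ccn' * C1' * ρ0 ^ 3 := by
    calc |a.re * E1.re + a.im * E1.im| ≤ ‖a‖ * ‖E1‖ := hinner
      _ ≤ (Γ' * (Ccn' * ρ0)) * (C1' * ρ0 ^ 2) :=
          mul_le_mul hanormb hE1b (norm_nonneg _) (by positivity)
      _ = Γ' * Ccn' * C1' * ρ0 ^ 3 := by ring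
  have hrζ : (0:ℝ) ≤ |r ζ| := abs_nonneg _
  rw [key]
  have htri : |γ ζ * (γ ζ - γ z) * ‖Δ‖ ^ 2
      + (- (r ζ) * E2.re - (r ζ) * E1.re
        + 2 * (a.re * E1.re + a.im * E1.im) + ‖E1‖ ^ 2)|
      ≤ |γ ζ * (γ ζ - γ z) * ‖Δ‖ ^ 2| + (|r ζ| * |E2.re| + |r ζ| * |E1.re|
        + 2 * |a.re * E1.re + a.im * E1.im| + ‖E1‖ ^ 2) := by
    have := abs_add_le (γ ζ * (γ ζ - γ z) * ‖Δ‖ ^ 2)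
      (- (r ζ) * E2.re - (r ζ) * E1.re
        + 2 * (a.re * E1.re + a.im * E1.im) + ‖E1‖ ^ 2)
    refine this.trans (add_le_add_right ?_ _)
    calc |(- (r ζ) * E2.re - (r ζ) * E1.re
          + 2 * (a.re * E1.re + a.im * E1.im) + ‖E1‖ ^ 2)|
        ≤ |(- (r ζ) * E2.re - (r ζ) * E1.re
          + 2 * (a.re * E1.re + a.im * E1.im))| + |‖E1‖ ^ 2| := abs_add_le _ _
      _ ≤ (|(- (r ζ) * E2.re - (r ζ) * E1.re)|
          + |2 * (a.re * E1.re + a.im * E1.im)|) + |‖E1‖ ^ 2| := by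
          gcongr; exact abs_add_le _ _
      _ ≤ ((|(- (r ζ) * E2.re)| + |(r ζ) * E1.re|)
          + |2 * (a.re * E1.re + a.im * E1.im)|) + |‖E1‖ ^ 2| := by
          gcongr; exact abs_sub _ _
      _ = |r ζ| * |E2.re| + |r ζ| * |E1.re|
          + 2 * |a.re * E1.re + a.im * E1.im| + ‖E1‖ ^ 2 := by
          rw [abs_mul, abs_mul, abs_mul, abs_neg, abs_of_nonneg (sq_nonneg ‖E1‖),
            abs_two]
  refine htri.trans ?_
  have hE2reb : |E2.re| ≤ C2' * ρ0 ^ 2 := hE2re'.trans hE2b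
  have hE1reb : |E1.re| ≤ C1' * ρ0 ^ 2 := hE1re'.trans hE1b
  have hrζ : (0:ℝ) ≤ |r ζ| := abs_nonneg _
  have step1 : |r ζ| * |E2.re| ≤ |r ζ| * (C2' * ρ0 ^ 2) :=
    mul_le_mul_of_nonneg_left hE2reb hrζ
  have step2 : |r ζ| * |E1.re| ≤ |r ζ| * (C1' * ρ0 ^ 2) :=
    mul_le_mul_of_nonneg_left hE1reb hrζ
  have bound : |γ ζ * (γ ζ - γ z) * ‖Δ‖ ^ 2| + (|r ζ| * |E2.re| + |r ζ| * |E1.re|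
        + 2 * |a.re * E1.re + a.im * E1.im| + ‖E1‖ ^ 2)
      ≤ Γ' * Cγ' * Ccn' ^ 2 * ρ0 ^ 3 + (|r ζ| * (C2' * ρ0 ^ 2)
        + |r ζ| * (C1' * ρ0 ^ 2) + 2 * (Γ' * Ccn' * C1' * ρ0 ^ 3)
        + C1' ^ 2 * ρ0 ^ 4) := by
    have h2i : 2 * |a.re * E1.re + a.im * E1.im| ≤ 2 * (Γ' * Ccn' * C1' * ρ0 ^ 3) := by
      linarith [hinnerb]
    exact add_le_add t1 (add_le_add (add_le_add (add_le_add step1 step2) h2i) hE1sq)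
  refine bound.trans ?_
  have nn1 : (0:ℝ) ≤ (Γ' * Cγ' * Ccn' ^ 2 + 2 * Γ' * Ccn' * C1' + C1' ^ 2)
      * (|r ζ| * ρ0 ^ 2) := by positivity
  have nn2 : (0:ℝ) ≤ (C1' ^ 2 + C1' + C2') * ρ0 ^ 3 := by positivity
  have nn3 : (0:ℝ) ≤ (Γ' * Cγ' * Ccn' ^ 2 + 2 * Γ' * Ccn' * C1' + C1' + C2')
      * ρ0 ^ 4 := by positivity
  have expand : (Γ' * Cγ' * Ccn' ^ 2 + (C1' + C2') + 2 * Γ' * Ccn' * C1' + C1' ^ 2)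
      * (|r ζ| * ρ0 ^ 2 + ρ0 ^ 3 + ρ0 ^ 4)
      = Γ' * Cγ' * Ccn' ^ 2 * ρ0 ^ 3 + (|r ζ| * (C2' * ρ0 ^ 2)
        + |r ζ| * (C1' * ρ0 ^ 2) + 2 * (Γ' * Ccn' * C1' * ρ0 ^ 3)
        + C1' ^ 2 * ρ0 ^ 4)
        + ((Γ' * Cγ' * Ccn' ^ 2 + 2 * Γ' * Ccn' * C1' + C1' ^ 2) * (|r ζ| * ρ0 ^ 2)
          + (C1' ^ 2 + C1' + C2') * ρ0 ^ 3
          + (Γ' * Cγ' * Ccn' ^ 2 + 2 * Γ' * Ccn' * C1' + C1' + C2') * ρ0 ^ 4) := by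
    ring
  linarith [nn1, nn2, nn3, expand.ge]
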